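/- Let (A, {·,·}, [[·,·]]) be an NS-Lie algebra and τ: A → K a linear form with τ([x,y]_*) = 0, where [x,y]_* = {x,y} - {y,x} + [[x,y]]. Then {x,y,z}_τ := τ(x){y,z} - τ(y){x,z} and [[x,y,z]]_τ := τ(x)[[y,z]] + τ(y)[[z,x]] + τ(z)[[x,y]] define a 3-NS-Lie algebra structure on A. -/

import Mathlib

universe u

def Skew12 {A M : Type*} [Neg M] (f : A → A → A → M) : Prop :=
  ∀ x y z, f x y z = - f y x z

def Skew23 {A M : Type*} [Neg M] (f : A → A → A → M) : Prop :=
  ∀ x y z, f x y z = - f x z y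

def LinFst (K : Type*) [Field K] {A M : Type*} [AddCommGroup A] [Module K A]
    [AddCommGroup M] [Module K M] (f : A → A → A → M) : Prop :=
  ∀ (a : K) (x x' y z : A), f (a • x + x') y z = a • f x y z + f x' y z

def LinThd (K : Type*) [Field K] {A M : Type*} [AddCommGroup A] [Module K A]
    [AddCommGroup M] [Module K M] (f : A → A → A → M) : Prop :=
  ∀ (a : K) (x y z z' : A), f x y (a • z + z') = a • f x y z + f x y z'

/-- A 3-Lie algebra structure: a trilinear skew-symmetric bracket satisfying
the Filippov (fundamental) identity. -/
def IsThreeLie (K : Type*) [Field K] {A : Type*} [AddCommGroup A] [Module K A]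
    (b : A → A → A → A) : Prop :=
  LinFst K b ∧ Skew12 b ∧ Skew23 b ∧
    ∀ x1 x2 x3 x4 x5 : A,
      b x1 x2 (b x3 x4 x5) =
        b (b x1 x2 x3) x4 x5 + b x3 (b x1 x2 x4) x5 + b x3 x4 (b x1 x2 x5)

/-- A representation of a 3-Lie algebra on a module. -/
def IsRep (K : Type*) [Field K] {A M : Type*} [AddCommGroup A] [Module K A]
    [AddCommGroup M] [Module K M] (b : A → A → A → A) (ρ : A → A → M → M) : Prop :=
  (∀ (a : K) (x x' y : A) (v : M), ρ (a • x + x') y v = a • ρ x y v + ρ x' y v) ∧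
  (∀ (x y : A) (v : M), ρ x y v = - ρ y x v) ∧
  (∀ (x y : A) (a : K) (v v' : M), ρ x y (a • v + v') = a • ρ x y v + ρ x y v') ∧
  (∀ (x1 x2 x3 x4 : A) (v : M),
      ρ x1 x2 (ρ x3 x4 v) =
        ρ (b x1 x2 x3) x4 v + ρ x3 (b x1 x2 x4) v + ρ x3 x4 (ρ x1 x2 v)) ∧
  (∀ (x1 x2 x3 x4 : A) (v : M),
      ρ (b x1 x2 x3) x4 v =
        ρ x1 x2 (ρ x3 x4 v) + ρ x2 x3 (ρ x1 x4 v) + ρ x3 x1 (ρ x2 x4 v))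

/-- A 2-cocycle in the Chevalley-Eilenberg complex of a 3-Lie algebra. -/
def IsCocycle (K : Type*) [Field K] {A M : Type*} [AddCommGroup A] [Module K A]
    [AddCommGroup M] [Module K M] (b : A → A → A → A) (ρ : A → A → M → M)
    (Θ : A → A → A → M) : Prop :=
  LinFst K Θ ∧ Skew12 Θ ∧ Skew23 Θ ∧
    ∀ x1 x2 y1 y2 y3 : A,
      Θ x1 x2 (b y1 y2 y3) + ρ x1 x2 (Θ y1 y2 y3) =
        Θ (b x1 x2 y1) y2 y3 + Θ y1 (b x1 x2 y2) y3 + Θ y1 y2 (b x1 x2 y3)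
          + ρ y2 y3 (Θ x1 x2 y1) + ρ y3 y1 (Θ x1 x2 y2) + ρ y1 y2 (Θ x1 x2 y3)

/-- A Θ-twisted O-operator on a 3-Lie algebra. -/
def IsTwistedO {K : Type*} [Field K] {A M : Type*} [AddCommGroup A] [Module K A]
    [AddCommGroup M] [Module K M] (b : A → A → A → A) (ρ : A → A → M → M)
    (Θ : A → A → A → M) (T : M →ₗ[K] A) : Prop :=
  ∀ u v w : M,
    b (T u) (T v) (T w) =
      T (ρ (T u) (T v) w + ρ (T v) (T w) u + ρ (T w) (T u) v + Θ (T u) (T v) (T w))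

/-- The Θ-twisted semidirect product bracket on A × M. -/
def sdBracket {A M : Type*} [AddCommGroup M]
    (b : A → A → A → A) (ρ : A → A → M → M) (Θ : A → A → A → M) :
    A × M → A × M → A × M → A × M :=
  fun p q r =>
    (b p.1 q.1 r.1,
      ρ p.1 q.1 r.2 + ρ r.1 p.1 q.2 + ρ q.1 r.1 p.2 + Θ p.1 q.1 r.1)

/-- The bracket [u,v,w]_T induced on V by a twisted O-operator T. -/
def indBracket {K : Type*} [Field K] {A M : Type*} [AddCommGroup A] [Module K A]
    [AddCommGroup M] [Module K M] (ρ : A → A → M → M) (Θ : A → A → A → M)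
    (T : M →ₗ[K] A) : M → M → M → M :=
  fun u v w =>
    ρ (T u) (T v) w + ρ (T v) (T w) u + ρ (T w) (T u) v + Θ (T u) (T v) (T w)

/-- Chevalley-Eilenberg coboundary of a 1-cochain θ : g → V. -/
def cobound {K : Type*} [Field K] {A M : Type*} [AddCommGroup A] [Module K A]
    [AddCommGroup M] [Module K M] (b : A → A → A → A) (ρ : A → A → M → M)
    (θ : A →ₗ[K] M) : A → A → A → M :=
  fun x y z => ρ x y (θ z) + ρ y z (θ x) + ρ z x (θ y) - θ (b x y z)

/-- Cyclic sum {x,y,z}^C = {x,y,z} + {y,z,x} + {z,x,y}. -/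
def cycSum {A : Type*} [AddCommGroup A] (m : A → A → A → A) : A → A → A → A :=
  fun x y z => m x y z + m y z x + m z x y

/-- Subadjacent bracket [x,y,z]_* = {x,y,z}^C + [[x,y,z]] of a 3-NS-Lie algebra. -/
def nsStar {A : Type*} [AddCommGroup A] (m n : A → A → A → A) : A → A → A → A :=
  fun x y z => cycSum m x y z + n x y z

/-- A 3-NS-Lie algebra structure on A given by operations m = {·,·,·} and n = [[·,·,·]]. -/
def IsThreeNS (K : Type*) [Field K] {A : Type*} [AddCommGroup A] [Module K A]
    (m n : A → A → A → A) : Prop :=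
  LinFst K m ∧ LinThd K m ∧ Skew12 m ∧ LinFst K n ∧ Skew12 n ∧ Skew23 n ∧
  (∀ x1 x2 x3 x4 x5 : A,
      m x1 x2 (m x3 x4 x5) =
        m (cycSum m x1 x2 x3) x4 x5 + m (n x1 x2 x3) x4 x5
          + m x3 (cycSum m x1 x2 x4) x5 + m x3 (n x1 x2 x4) x5
          + m x3 x4 (m x1 x2 x5)) ∧
  (∀ x1 x2 x3 x4 x5 : A,
      m (cycSum m x1 x2 x3) x4 x5 + m (n x1 x2 x3) x4 x5 =
        m x1 x2 (m x3 x4 x5) + m x2 x3 (m x1 x4 x5) + m x3 x1 (m x2 x4 x5)) ∧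
  (∀ x1 x2 x3 x4 x5 : A,
      n x1 x2 (nsStar m n x3 x4 x5) + m x1 x2 (n x3 x4 x5) =
        n (nsStar m n x1 x2 x3) x4 x5 + n x3 (nsStar m n x1 x2 x4) x5
          + n x3 x4 (nsStar m n x1 x2 x5)
          + m x4 x5 (n x1 x2 x3) + m x5 x3 (n x1 x2 x4) + m x3 x4 (n x1 x2 x5))

/-- Nijenhuis operator on a 3-Lie algebra. -/
def IsNijenhuis {K : Type*} [Field K] {A : Type*} [AddCommGroup A] [Module K A]
    (b : A → A → A → A) (N : A →ₗ[K] A) : Prop :=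
  ∀ x y z : A,
    b (N x) (N y) (N z) =
      N (b (N x) (N y) z + b (N x) y (N z) + b x (N y) (N z)
        - N (b (N x) y z + b x (N y) z + b x y (N z)) + N (N (b x y z)))

/-- A Lie algebra structure (bilinear skew bracket with Jacobi identity). -/
def IsLie (K : Type*) [Field K] {A : Type*} [AddCommGroup A] [Module K A]
    (br : A → A → A) : Prop :=
  (∀ (a : K) (x x' y : A), br (a • x + x') y = a • br x y + br x' y) ∧
  (∀ x y : A, br x y = - br y x) ∧
  (∀ x y z : A, br x (br y z) = br (br x y) z + br y (br x z))

/-- A representation of a Lie algebra. -/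
def IsLieRep (K : Type*) [Field K] {A M : Type*} [AddCommGroup A] [Module K A]
    [AddCommGroup M] [Module K M] (br : A → A → A) (ρ : A → M → M) : Prop :=
  (∀ (a : K) (x x' : A) (v : M), ρ (a • x + x') v = a • ρ x v + ρ x' v) ∧
  (∀ (x : A) (a : K) (v v' : M), ρ x (a • v + v') = a • ρ x v + ρ x v') ∧
  (∀ (x y : A) (v : M), ρ (br x y) v = ρ x (ρ y v) - ρ y (ρ x v))

/-- A Chevalley-Eilenberg 2-cocycle of a Lie algebra. -/
def IsLieCocycle (K : Type*) [Field K] {A M : Type*} [AddCommGroup A] [Module K A]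
    [AddCommGroup M] [Module K M] (br : A → A → A) (ρ : A → M → M)
    (Θ : A → A → M) : Prop :=
  (∀ (a : K) (x x' y : A), Θ (a • x + x') y = a • Θ x y + Θ x' y) ∧
  (∀ x y : A, Θ x y = - Θ y x) ∧
  (∀ x y z : A,
      ρ x (Θ y z) + ρ y (Θ z x) + ρ z (Θ x y)
        + Θ x (br y z) + Θ y (br z x) + Θ z (br x y) = 0)

/-- A Θ-twisted O-operator on a Lie algebra. -/
def IsLieTwistedO {K : Type*} [Field K] {A M : Type*} [AddCommGroup A] [Module K A]
    [AddCommGroup M] [Module K M] (br : A → A → A) (ρ : A → M → M)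
    (Θ : A → A → M) (T : M →ₗ[K] A) : Prop :=
  ∀ u v : M, br (T u) (T v) = T (ρ (T u) v - ρ (T v) u + Θ (T u) (T v))

/-- The 3-Lie bracket induced by a Lie bracket and a trace map τ. -/
def inducedTri {K : Type*} [Field K] {A : Type*} [AddCommGroup A] [Module K A]
    (br : A → A → A) (τ : A →ₗ[K] K) : A → A → A → A :=
  fun x y z => τ x • br y z + τ y • br z x + τ z • br x y

/-- The induced representation ρ_τ of the induced 3-Lie algebra. -/
def rhoTau {K : Type*} [Field K] {A M : Type*} [AddCommGroup A] [Module K A]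
    [AddCommGroup M] [Module K M] (ρ : A → M → M) (τ : A →ₗ[K] K) :
    A → A → M → M :=
  fun x y v => τ x • ρ y v - τ y • ρ x v

/-- The induced 2-cocycle Θ_τ on the induced 3-Lie algebra. -/
def thetaTau {K : Type*} [Field K] {A M : Type*} [AddCommGroup A] [Module K A]
    [AddCommGroup M] [Module K M] (Θ : A → A → M) (τ : A →ₗ[K] K) :
    A → A → A → M :=
  fun x y z => τ x • Θ y z + τ y • Θ z x + τ z • Θ x y

/-- An NS-Lie algebra structure on A. -/
def IsNSLie (K : Type*) [Field K] {A : Type*} [AddCommGroup A] [Module K A]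
    (m n : A → A → A) : Prop :=
  (∀ (a : K) (x x' y : A), m (a • x + x') y = a • m x y + m x' y) ∧
  (∀ (x : A) (a : K) (y y' : A), m x (a • y + y') = a • m x y + m x y') ∧
  (∀ (a : K) (x x' y : A), n (a • x + x') y = a • n x y + n x' y) ∧
  (∀ x y : A, n x y = - n y x) ∧
  (∀ x y z : A,
      m (m x y) z - m x (m y z) - m (m y x) z + m y (m x z) + m (n x y) z = 0) ∧
  (∀ x y z : A,
      n x (m y z - m z y + n y z) + n y (m z x - m x z + n z x)
        + n z (m x y - m y x + n x y)
        + m x (n y z) + m y (n z x) + m z (n x y) = 0)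

/-- an NS-Lie algebra and a trace map induce a 3-NS-Lie algebra. -/
theorem stmt18 {K : Type*} [Field K] {A : Type*} [AddCommGroup A] [Module K A]
    (m n : A → A → A) (τ : A →ₗ[K] K)
    (h : IsNSLie K m n)
    (htr : ∀ x y : A, τ (m x y - m y x + n x y) = 0) :
    IsThreeNS K (fun x y z => τ x • m y z - τ y • m x z)
      (fun x y z => τ x • n y z + τ y • n z x + τ z • n x y) := by
  obtain ⟨hml, hmr, hnl, hn, hA1, hA2⟩ := h
  -- zero / add / smul / neg / sub lemmas for m (left)
  have hm0l : ∀ y : A, m 0 y = 0 := by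
    intro y
    have h1 := hml 1 0 0 y
    simp only [one_smul, add_zero] at h1
    exact (left_eq_add.mp h1)
  have hmal : ∀ x x' y : A, m (x + x') y = m x y + m x' y := by
    intro x x' y; simpa using hml 1 x x' y
  have hmsl : ∀ (a : K) (x y : A), m (a • x) y = a • m x y := by
    intro a x y; simpa [hm0l] using hml a x 0 y
  have hmnl : ∀ x y : A, m (-x) y = - m x y := by
    intro x y; simpa using hmsl (-1) x y
  have hmsubl : ∀ x x' y : A, m (x - x') y = m x y - m x' y := by
    intro x x' y; rw [sub_eq_add_neg, hmal, hmnl, ← sub_eq_add_neg]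
  -- right versions for m
  have hm0r : ∀ x : A, m x 0 = 0 := by
    intro x
    have h1 := hmr x 1 0 0
    simp only [one_smul, add_zero] at h1
    exact (left_eq_add.mp h1)
  have hmar : ∀ x y y' : A, m x (y + y') = m x y + m x y' := by
    intro x y y'; simpa using hmr x 1 y y'
  have hmsr : ∀ (x : A) (a : K) (y : A), m x (a • y) = a • m x y := by
    intro x a y; simpa [hm0r] using hmr x a y 0
  have hmnr : ∀ x y : A, m x (-y) = - m x y := by
    intro x y; simpa using hmsr x (-1) y
  have hmsubr : ∀ x y y' : A, m x (y - y') = m x y - m x y' := by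
    intro x y y'; rw [sub_eq_add_neg, hmar, hmnr, ← sub_eq_add_neg]
  -- left versions for n
  have hn0l : ∀ y : A, n 0 y = 0 := by
    intro y
    have h1 := hnl 1 0 0 y
    simp only [one_smul, add_zero] at h1
    exact (left_eq_add.mp h1)
  have hnal : ∀ x x' y : A, n (x + x') y = n x y + n x' y := by
    intro x x' y; simpa using hnl 1 x x' y
  have hnsl : ∀ (a : K) (x y : A), n (a • x) y = a • n x y := by
    intro a x y; simpa [hn0l] using hnl a x 0 y
  have hnnl : ∀ x y : A, n (-x) y = - n x y := by
    intro x y; simpa using hnsl (-1) x y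
  have hnsubl : ∀ x x' y : A, n (x - x') y = n x y - n x' y := by
    intro x x' y; rw [sub_eq_add_neg, hnal, hnnl, ← sub_eq_add_neg]
  -- right versions for n, via skew-symmetry
  have hnar : ∀ x y y' : A, n x (y + y') = n x y + n x y' := by
    intro x y y'
    rw [hn x (y + y'), hnal, neg_add, ← hn x y, ← hn x y']
  have hnsr : ∀ (x : A) (a : K) (y : A), n x (a • y) = a • n x y := by
    intro x a y
    rw [hn x (a • y), hnsl, ← smul_neg, ← hn x y]
  have hnnr : ∀ x y : A, n x (-y) = - n x y := by
    intro x y; simpa using hnsr x (-1) y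
  have hnsubr : ∀ x y y' : A, n x (y - y') = n x y - n x y' := by
    intro x y y'; rw [sub_eq_add_neg, hnar, hnnr, ← sub_eq_add_neg]
  -- trace identity, expanded
  have htr' : ∀ x y : A, τ (m x y) - τ (m y x) + τ (n x y) = 0 := by
    intro x y
    have h0 := htr x y
    rw [map_add, map_sub] at h0
    exact h0
  -- second NS axiom, expanded
  have hA2e : ∀ x y z : A,
      n x (m y z) - n x (m z y) + n x (n y z)
        + (n y (m z x) - n y (m x z) + n y (n z x))
        + (n z (m x y) - n z (m y x) + n z (n x y))
        + m x (n y z) + m y (n z x) + m z (n x y) = 0 := by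
    intro x y z
    have h2 := hA2 x y z
    simp only [hnar, hnsubr] at h2
    linear_combination (norm := module) h2
  have hmsk : ∀ a b c : A, m a (n b c) = - m a (n c b) := by
    intro a b c; rw [hn b c, hmnr]
  have hnsk : ∀ a b c : A, n a (n b c) = - n a (n c b) := by
    intro a b c; rw [hn b c, hnnr]
  unfold IsThreeNS LinFst LinThd Skew12 Skew23 cycSum nsStar
  refine ⟨?_, ?_, ?_, ?_, ?_, ?_, ?_, ?_, ?_⟩
  · intro a x x' y z
    simp only [map_add, map_smul, smul_eq_mul, hmal, hmsl]
    module
  · intro a x y z z'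
    simp only [hmar, hmsr]
    module
  · intro x y z
    module
  · intro a x x' y z
    simp only [map_add, map_smul, smul_eq_mul, hnal, hnsl, hnar, hnsr]
    module
  · intro x y z
    linear_combination (norm := module)
      (τ x) • hn y z + (τ y) • hn z x + (τ z) • hn x y
  · intro x y z
    linear_combination (norm := module)
      (τ x) • hn y z + (τ y) • hn z x + (τ z) • hn x y
  · intro x1 x2 x3 x4 x5
    simp only [nsStar, cycSum, map_add, map_sub, map_smul, map_neg, hmal, hmsl, hmnl, hmsubl,
      hmar, hmsr, hmnr, hmsubr, hnal, hnsl, hnnl, hnsubl, hnar, hnsr, hnnr,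
      hnsubr, smul_add, smul_sub, smul_neg, smul_eq_mul]
    linear_combination (norm := module)
      (τ x1 * τ x4) • hA1 x2 x3 x5 - (τ x1 * τ x3) • hA1 x2 x4 x5
        + (τ x2 * τ x4) • hA1 x3 x1 x5 - (τ x2 * τ x3) • hA1 x4 x1 x5
        - (τ x3 * htr' x1 x2) • m x4 x5 - (τ x1 * htr' x2 x3) • m x4 x5
        - (τ x2 * htr' x3 x1) • m x4 x5
        + (τ x4 * htr' x1 x2) • m x3 x5 + (τ x1 * htr' x2 x4) • m x3 x5
        + (τ x2 * htr' x4 x1) • m x3 x5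
  · intro x1 x2 x3 x4 x5
    simp only [nsStar, cycSum, map_add, map_sub, map_smul, map_neg, hmal, hmsl, hmnl, hmsubl,
      hmar, hmsr, hmnr, hmsubr, hnal, hnsl, hnnl, hnsubl, hnar, hnsr, hnnr,
      hnsubr, smul_add, smul_sub, smul_neg, smul_eq_mul]
    linear_combination (norm := module)
      - (τ x3 * τ x4) • hA1 x1 x2 x5 - (τ x1 * τ x4) • hA1 x2 x3 x5
        - (τ x2 * τ x4) • hA1 x3 x1 x5
        + (τ x3 * htr' x1 x2) • m x4 x5 + (τ x1 * htr' x2 x3) • m x4 x5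
        + (τ x2 * htr' x3 x1) • m x4 x5
  · intro x1 x2 x3 x4 x5
    simp only [nsStar, cycSum, map_add, map_sub, map_smul, map_neg, hmal, hmsl, hmnl, hmsubl,
      hmar, hmsr, hmnr, hmsubr, hnal, hnsl, hnnl, hnsubl, hnar, hnsr, hnnr,
      hnsubr, smul_add, smul_sub, smul_neg, smul_eq_mul]
    linear_combination (norm := module)
      - (τ x2 * τ x5) • hA2e x1 x3 x4 - (τ x2 * τ x3) • hA2e x1 x4 x5
        - (τ x2 * τ x4) • hA2e x1 x5 x3 + (τ x1 * τ x5) • hA2e x2 x3 x4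
        + (τ x1 * τ x3) • hA2e x2 x4 x5 + (τ x1 * τ x4) • hA2e x2 x5 x3
        - (τ x3 * htr' x1 x2) • n x4 x5 - (τ x4 * htr' x1 x2) • n x5 x3
        - (τ x5 * htr' x1 x2) • n x3 x4 - (τ x1 * htr' x2 x3) • n x4 x5
        - (τ x1 * htr' x2 x4) • n x5 x3 - (τ x1 * htr' x2 x5) • n x3 x4
        - (τ x2 * htr' x3 x1) • n x4 x5 + (τ x5 * htr' x3 x4) • n x1 x2
        - (τ x2 * htr' x4 x1) • n x5 x3 + (τ x3 * htr' x4 x5) • n x1 x2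
        - (τ x2 * htr' x5 x1) • n x3 x4 + (τ x4 * htr' x5 x3) • n x1 x2
        + (τ x2 * τ x4) • hmsk x3 x1 x5 - (τ x1 * τ x5) • hmsk x3 x2 x4
        + (τ x2 * τ x5) • hmsk x4 x1 x3 - (τ x1 * τ x3) • hmsk x4 x2 x5
        + (τ x2 * τ x3) • hmsk x5 x1 x4 - (τ x1 * τ x4) • hmsk x5 x2 x3
        + (τ x2 * τ x4) • hnsk x3 x1 x5 - (τ x1 * τ x5) • hnsk x3 x2 x4
        + (τ x2 * τ x5) • hnsk x4 x1 x3 - (τ x1 * τ x3) • hnsk x4 x2 x5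
        + (τ x2 * τ x3) • hnsk x5 x1 x4 - (τ x1 * τ x4) • hnsk x5 x2 x3
        - (τ x4 * τ x5) • hn (m x1 x2) x3 - (τ x3 * τ x5) • hn (m x1 x2) x4
        - (τ x3 * τ x4) • hn (m x1 x2) x5
        + (τ x2 * τ x5) • hn (m x1 x3) x4 + (τ x2 * τ x3) • hn (m x1 x4) x5
        + (τ x2 * τ x4) • hn (m x1 x5) x3
        + (τ x4 * τ x5) • hn (m x2 x1) x3 + (τ x3 * τ x5) • hn (m x2 x1) x4
        + (τ x3 * τ x4) • hn (m x2 x1) x5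
        - (τ x1 * τ x5) • hn (m x2 x3) x4 - (τ x1 * τ x3) • hn (m x2 x4) x5
        - (τ x1 * τ x4) • hn (m x2 x5) x3
        - (τ x2 * τ x5) • hn (m x3 x1) x4 + (τ x1 * τ x5) • hn (m x3 x2) x4
        + (τ x2 * τ x5) • hn (m x3 x4) x1 - (τ x2 * τ x4) • hn (m x3 x5) x1
        - (τ x2 * τ x3) • hn (m x4 x1) x5 + (τ x1 * τ x3) • hn (m x4 x2) x5
        - (τ x2 * τ x5) • hn (m x4 x3) x1 + (τ x2 * τ x3) • hn (m x4 x5) x1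
        - (τ x2 * τ x4) • hn (m x5 x1) x3 + (τ x1 * τ x4) • hn (m x5 x2) x3
        + (τ x2 * τ x4) • hn (m x5 x3) x1 - (τ x2 * τ x3) • hn (m x5 x4) x1
        - (τ x4 * τ x5) • hn (n x1 x2) x3 - (τ x3 * τ x5) • hn (n x1 x2) x4
        - (τ x3 * τ x4) • hn (n x1 x2) x5
        - (τ x1 * τ x5) • hn (n x2 x3) x4 - (τ x1 * τ x3) • hn (n x2 x4) x5
        - (τ x1 * τ x4) • hn (n x2 x5) x3
        - (τ x2 * τ x5) • hn (n x3 x1) x4 + (τ x2 * τ x5) • hn (n x3 x4) x1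
        - (τ x2 * τ x3) • hn (n x4 x1) x5 + (τ x2 * τ x3) • hn (n x4 x5) x1
        - (τ x2 * τ x4) • hn (n x5 x1) x3 + (τ x2 * τ x4) • hn (n x5 x3) x1
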